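/- Let G be the root gadget and let C be the class of rooted pseudo networks that are tree-child. Then G has a C_A-orientation whose root ρ subdivides the edge {w,x}. -/

import Mathlib

/-!
Common definitions: rooted (pseudo/phylogenetic) networks represented as arc
relations `D : V → V → Prop` on a vertex type `V`, with in/out-degrees measured
by `Set.ncard`, together with the orientation notions (Variant A, Variant B,
orientations of connector networks) from the paper.
-/

section Prelude

universe u
variable {V : Type u}

/-- In-degree of `v` in the digraph with arc relation `D`. -/
noncomputable def inDeg (D : V → V → Prop) (v : V) : ℕ := Set.ncard {u | D u v}

/-- Out-degree of `v` in the digraph with arc relation `D`. -/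
noncomputable def outDeg (D : V → V → Prop) (v : V) : ℕ := Set.ncard {u | D v u}

/-- A digraph is acyclic if it has no directed cycle. -/
def Acyclic (D : V → V → Prop) : Prop := ∀ v, ¬ Relation.TransGen D v v

/-- A tree vertex: in-degree 1 and out-degree at least 1. -/
def IsTreeVertex (D : V → V → Prop) (v : V) : Prop := inDeg D v = 1 ∧ 1 ≤ outDeg D v

/-- A leaf (sink) of a digraph. -/
def IsLeafVertex (D : V → V → Prop) (v : V) : Prop := outDeg D v = 0

/-- Tree-child: every non-leaf vertex has a child that is a tree vertex or a leaf. -/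
def TreeChild (D : V → V → Prop) : Prop :=
  ∀ v, ¬ IsLeafVertex D v → ∃ u, D v u ∧ (IsTreeVertex D u ∨ IsLeafVertex D u)

/-- Funneled: every reticulation (in-degree at least 2) has out-degree 1. -/
def Funneled (D : V → V → Prop) : Prop := ∀ v, 2 ≤ inDeg D v → outDeg D v = 1

/-- An arc `(a,b)` is a shortcut if there is another directed path from `a` to `b`. -/
def IsShortcut (D : V → V → Prop) (a b : V) : Prop :=
  D a b ∧ ∃ c, D a c ∧ Relation.TransGen D c b

/-- Normal: tree-child and without shortcuts. -/
def NormalNet (D : V → V → Prop) : Prop := TreeChild D ∧ ∀ a b, ¬ IsShortcut D a b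

/-- `D` is a rooted pseudo network with root `ρ` whose set of leaves is `X`
(leaves are labelled by themselves). -/
def IsRootedPseudoNetwork (D : V → V → Prop) (ρ : V) (X : Set V) : Prop :=
  Acyclic D ∧ (∀ v, ¬ D v v) ∧
  inDeg D ρ = 0 ∧ 1 ≤ outDeg D ρ ∧
  (∀ v, inDeg D v = 0 → v = ρ) ∧
  (∀ v, outDeg D v = 0 → inDeg D v = 1) ∧
  {v | outDeg D v = 0} = X ∧
  (∀ v, v ≠ ρ → outDeg D v ≠ 0 → 1 ≤ inDeg D v ∧ 1 ≤ outDeg D v)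

/-- `D` is a rooted phylogenetic network with root `ρ` and leaf set `X`:
additionally every internal vertex has in-degree 1 and out-degree ≥ 2, or
in-degree ≥ 2 and out-degree ≥ 1. -/
def IsRootedPhyloNetwork (D : V → V → Prop) (ρ : V) (X : Set V) : Prop :=
  Acyclic D ∧ (∀ v, ¬ D v v) ∧
  inDeg D ρ = 0 ∧ 1 ≤ outDeg D ρ ∧
  (∀ v, inDeg D v = 0 → v = ρ) ∧
  (∀ v, outDeg D v = 0 → inDeg D v = 1) ∧
  {v | outDeg D v = 0} = X ∧
  (∀ v, v ≠ ρ → outDeg D v ≠ 0 →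
    (inDeg D v = 1 ∧ 2 ≤ outDeg D v) ∨ (2 ≤ inDeg D v ∧ 1 ≤ outDeg D v))

/-- `{u,w} = {a,b}` as unordered pairs. -/
def SamePair (u w a b : V) : Prop := (u = a ∧ w = b) ∨ (u = b ∧ w = a)

/-- A Variant-A orientation of the undirected graph `adj` obtained by
subdividing the edge `{a,b}` with a new root vertex `none` and directing all
edges; `D` is the resulting arc relation on `Option V` (the root is `none`). -/
def VariantA (adj : V → V → Prop) (a b : V) (D : Option V → Option V → Prop) : Prop :=
  adj a b ∧
  D none (some a) ∧ D none (some b) ∧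
  (∀ o, ¬ D o none) ∧
  (∀ u, D none (some u) → u = a ∨ u = b) ∧
  (∀ u w : V, D (some u) (some w) → adj u w ∧ ¬ SamePair u w a b) ∧
  (∀ u w : V, adj u w → ¬ SamePair u w a b → (D (some u) (some w) ↔ ¬ D (some w) (some u)))

/-- `D` assigns to each edge of `adj` exactly one direction (used for
Variant-B orientations and for orientations of connector networks). -/
def IsOrientation (adj D : V → V → Prop) : Prop :=
  (∀ a b, D a b → adj a b) ∧ (∀ a b, adj a b → (D a b ↔ ¬ D b a))

/-- An orientation of a connector network with labelled leaves `L` and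
connector leaves `Uc` that is acyclic, in which every labelled leaf has
out-degree 0 and every vertex not in `L ∪ Uc` has in-degree ≥ 1 and
out-degree ≥ 1 (the standing hypotheses for the compatibility notions). -/
def GoodOrientation (adj D : V → V → Prop) (L Uc : Set V) : Prop :=
  IsOrientation adj D ∧ Acyclic D ∧ (∀ v ∈ L, outDeg D v = 0) ∧
  (∀ v, v ∉ L ∪ Uc → 1 ≤ inDeg D v ∧ 1 ≤ outDeg D v)

/-- F-compatible: every vertex of in-degree at least 2 has out-degree 1. -/
def FCompatible (D : V → V → Prop) : Prop := ∀ v, 2 ≤ inDeg D v → outDeg D v = 1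

/-- TC-compatible orientation of a connector network. -/
def TCCompatible (D : V → V → Prop) (L Uc : Set V) : Prop :=
  ∀ v, v ∉ L ∪ Uc → ∃ u, D v u ∧ (u ∈ L ∪ Uc ∨ (inDeg D u = 1 ∧ 1 ≤ outDeg D u))

/-- Strongly TC-compatible orientation of a connector network. -/
def StrongTCCompatible (D : V → V → Prop) (L Uc : Set V) : Prop :=
  ∀ v, v ∉ L ∪ Uc → ∃ u, D v u ∧ (u ∈ L ∨ (inDeg D u = 1 ∧ 1 ≤ outDeg D u))

end Prelude

namespace PaperFormalization

/-- Vertices of the root gadget: connector leaf `r`, internal vertices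
`v,w,x,y,z`, and labelled leaves `lf, lf'`. -/
inductive RGV : Type
  | r | v | w | x | y | z | lf | lf'

/-- The edges of the root gadget (one fixed orientation of each edge). -/
def rgBase : RGV → RGV → Prop
  | .r, .v => True
  | .v, .w => True
  | .v, .x => True
  | .w, .x => True
  | .w, .y => True
  | .x, .z => True
  | .y, .z => True
  | .y, .lf => True
  | .z, .lf' => True
  | _, _ => False

/-- Adjacency relation of the root gadget. -/
def rgAdj (a b : RGV) : Prop := rgBase a b ∨ rgBase b a

/-- Leaf set of the partner network of the root gadget (the connector leaf `r`
is regarded as a labelled leaf). -/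
def rgLeaves : Set RGV := {RGV.r, RGV.lf, RGV.lf'}

end PaperFormalization

namespace PaperFormalization

deriving instance DecidableEq for RGV

instance : Fintype RGV :=
  ⟨{.r, .v, .w, .x, .y, .z, .lf, .lf'}, fun a => by cases a <;> decide⟩

/-- The chosen orientation's arcs, as a Boolean relation. -/
def rgD : Option RGV → Option RGV → Bool
  | none, some .w => true
  | none, some .x => true
  | some .w, some .v => true
  | some .w, some .y => true
  | some .v, some .r => true
  | some .v, some .x => true
  | some .x, some .z => true
  | some .z, some .y => true
  | some .z, some .lf' => true
  | some .y, some .lf => true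
  | _, _ => false

/-- Rank function certifying acyclicity. -/
def rgRank : Option RGV → ℕ
  | none => 0
  | some .w => 1
  | some .v => 2
  | some .x => 3
  | some .z => 4
  | some .y => 5
  | some .r => 6
  | some .lf => 6
  | some .lf' => 6

instance : DecidableRel rgBase := fun a b => by
  cases a <;> cases b <;> first | exact .isTrue trivial | exact .isFalse id

instance : DecidableRel rgAdj := fun a b => by unfold rgAdj; infer_instance

instance (a b c d : RGV) : Decidable (SamePair a b c d) := by
  unfold SamePair; infer_instance

lemma rg_ncard_filter (p : Option RGV → Prop) [DecidablePred p] :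
    Set.ncard {x | p x} = (Finset.univ.filter p).card := by
  rw [Set.ncard_eq_toFinset_card', Set.toFinset_setOf]

lemma rg_inDeg (v : Option RGV) :
    inDeg (fun a b => rgD a b = true) v
      = (Finset.univ.filter (fun u => rgD u v = true)).card :=
  rg_ncard_filter _

lemma rg_outDeg (v : Option RGV) :
    outDeg (fun a b => rgD a b = true) v
      = (Finset.univ.filter (fun u => rgD v u = true)).card :=
  rg_ncard_filter _

lemma rg_acyclic : Acyclic (fun a b => rgD a b = true) := by
  have mono : ∀ a b : Option RGV, rgD a b = true → rgRank a < rgRank b := by decide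
  have h : ∀ a b, Relation.TransGen (fun a b => rgD a b = true) a b →
      rgRank a < rgRank b := by
    intro a b hab
    induction hab with
    | single h => exact mono _ _ h
    | tail _ h ih => exact ih.trans (mono _ _ h)
  intro v hv
  exact lt_irrefl _ (h v v hv)

/-- Lemma `root_gadget`(i): the root gadget has a
`C_A`-orientation, for `C` the class of tree-child rooted pseudo networks,
whose root `ρ` subdivides the edge `{w,x}`. -/
theorem root_gadget_has_treechild_CA_orientation_at_wx :
    ∃ D : Option RGV → Option RGV → Prop,
      VariantA rgAdj RGV.w RGV.x D ∧
      IsRootedPseudoNetwork D none (Option.some '' rgLeaves) ∧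
      TreeChild D := by
  refine ⟨fun a b => rgD a b = true, ⟨Or.inl trivial, rfl, rfl, by decide, by decide,
    by decide, by decide⟩, ⟨rg_acyclic, by decide,
    by rw [rg_inDeg]; decide,
    by rw [rg_outDeg]; decide,
    by simp only [rg_inDeg]; decide,
    by simp only [rg_outDeg, rg_inDeg]; decide,
    ?_,
    by simp only [rg_outDeg, rg_inDeg]; decide⟩, ?_⟩
  · ext u
    simp only [Set.mem_setOf_eq, rg_outDeg, rgLeaves, Set.image_insert_eq,
      Set.image_singleton, Set.mem_insert_iff, Set.mem_singleton_iff]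
    revert u; decide
  · intro u hu
    simp only [IsLeafVertex, rg_outDeg] at hu
    simp only [IsTreeVertex, IsLeafVertex, rg_inDeg, rg_outDeg]
    revert hu; revert u; decide


end PaperFormalization
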